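/- Let A be a countable alphabet, φ a normalized potential on X_- = A^{ℤ_-}, and (M_n)_{n≥1} a strictly increasing sequence of natural numbers with M_1 = 1. Let x, y ∈ X_- and let μ, ν be probability measures on X = A^ℤ compatible with φ such that μ[η_{-∞}^0 ∈ ·] = δ_x and ν[η_{-∞}^0 ∈ ·] = δ_y. Then for all n ≥ 1, 0 ≤ k ≤ n−1 and all a, b, c ∈ X, the Kullback–Leibler divergence between the conditional law under μ of the block η_{M_n}^{M_{n+1}−1} given η_1^{M_n−1} = a_{M_{n−k}}^{M_n−1} b_1^{M_{n−k}−1} and the conditional law under ν of η_{M_n}^{M_{n+1}−1} given η_1^{M_n−1} = a_{M_{n−k}}^{M_n−1} c_1^{M_{n−k}−1} is at most Σ_{j=M_n}^{M_{n+1}−1} χ²_{j−M_{n−k}}(φ). -/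

import Mathlib

open MeasureTheory ENNReal

noncomputable section

namespace GGT

variable {A : Type*}

/-- Concatenation `a·x`: the past with most recent symbol `a` followed by `x`. -/
def cons (a : A) (x : ℕ → A) : ℕ → A := fun n => Nat.casesOn n a x

/-- Word concatenation: the first `k` coordinates are taken from `z`, the remaining tail from `x`. -/
def wcat (k : ℕ) (z x : ℕ → A) : ℕ → A := fun n => if n < k then z n else x (n - k)

/-- `φ` is a normalized potential. -/
def IsNormalized (φ : (ℕ → A) → ℝ) : Prop :=
  ∀ x : ℕ → A, ∑' a : A, Real.exp (φ (cons a x)) = 1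

/-- The χ²-variation of order `k` of `φ`. -/
def chiSq (φ : (ℕ → A) → ℝ) (k : ℕ) : ℝ≥0∞ :=
  ⨆ (z : ℕ → A) (x : ℕ → A) (y : ℕ → A),
    ∑' b : A, ENNReal.ofReal
      ((Real.exp (φ (cons b (wcat k z x))) - Real.exp (φ (cons b (wcat k z y)))) ^ 2
        / Real.exp (φ (cons b (wcat k z y))))

/-- The variation of order `k` of a function `f` on the past space. -/
def varE (f : (ℕ → A) → ℝ) (k : ℕ) : ℝ≥0∞ :=
  ⨆ (z : ℕ → A) (x : ℕ → A) (y : ℕ → A),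
    ∑' b : A, ENNReal.ofReal |f (cons b (wcat k z x)) - f (cons b (wcat k z y))|

/-- Assumption (A): `χ²_k(φ) ≤ C / k^(1+δ)` for all `k ≥ 1`. -/
def AssumptionA (φ : (ℕ → A) → ℝ) (C δ : ℝ) : Prop :=
  ∀ k : ℕ, 1 ≤ k → chiSq φ k ≤ ENNReal.ofReal (C / (k : ℝ) ^ (1 + δ))

/-- The past `(ω_n, ω_{n-1}, ω_{n-2}, ...)` of a configuration `ω`. -/
def past (n : ℤ) (ω : ℤ → A) : ℕ → A := fun j => ω (n - j)

variable [MeasurableSpace A]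

/-- The σ-algebra generated by the coordinates `(... , n-1, n)`. -/
def pastMS (n : ℤ) : MeasurableSpace (ℤ → A) :=
  MeasurableSpace.comap (past n) MeasurableSpace.pi

/-- A probability measure on `A^ℤ` is compatible with `φ` if the conditional probability of
`η_{n+1} = a` given the past up to time `n` is `exp (φ (a · past))`. -/
def IsCompatible (φ : (ℕ → A) → ℝ) (μ : Measure (ℤ → A)) : Prop :=
  IsProbabilityMeasure μ ∧
  ∀ (n : ℕ) (a : A),
    (μ[Set.indicator {ω : ℤ → A | ω ((n : ℤ) + 1) = a} (fun _ => (1 : ℝ)) | pastMS (n : ℤ)])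
      =ᵐ[μ] fun ω => Real.exp (φ (cons a (past (n : ℤ) ω)))

/-- Total variation distance between two measures. -/
def dTV {Ω : Type*} [MeasurableSpace Ω] (P Q : Measure Ω) : ℝ :=
  ⨆ s : {s : Set Ω // MeasurableSet s}, |(P s.1).toReal - (Q s.1).toReal|

end GGT

open ProbabilityTheory

namespace GGT

variable {A : Type*}

/-- Kullback–Leibler divergence between two measures on a countable space. -/
def klDiv {Y : Type*} [MeasurableSpace Y] (P Q : MeasureTheory.Measure Y) : ℝ :=
  ∑' y : Y, (P {y}).toReal * Real.log ((P {y}).toReal / (Q {y}).toReal)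

/-- The block of coordinates `(ω_l, ..., ω_{r-1})`. -/
def blockMap (l r : ℕ) (ω : ℤ → A) : Fin (r - l) → A := fun j => ω ((l : ℤ) + (j : ℤ))

/-- The event `η_1^{M_n - 1} = a_{M_{n-k}}^{M_n - 1} b_1^{M_{n-k} - 1}`: the coordinates in
`[M_{n-k}, M_n - 1]` agree with `a` and the coordinates in `[1, M_{n-k} - 1]` agree with `b`
(empty constraints are dropped). -/
def condEvent (M : ℕ → ℕ) (n k : ℕ) (a b : ℤ → A) : Set (ℤ → A) :=
  {ω | (∀ j : ℕ, M (n - k) ≤ j → j < M n → ω (j : ℤ) = a (j : ℤ)) ∧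
       (∀ j : ℕ, 1 ≤ j → j < M (n - k) → ω (j : ℤ) = b (j : ℤ))}

/-- The conditional law of the block `η_{M_n}^{M_{n+1}-1}` given the past event. -/
def condBlockLaw [MeasurableSpace A] (M : ℕ → ℕ) (n k : ℕ) (a b : ℤ → A)
    (μ : MeasureTheory.Measure (ℤ → A)) :
    MeasureTheory.Measure (Fin (M (n + 1) - M n) → A) :=
  (μ[|condEvent M n k a b]).map (blockMap (M n) (M (n + 1)))

end GGT

namespace GGTP

variable {A : Type*}

noncomputable def mass (φ : (ℕ → A) → ℝ) : ∀ L : ℕ, (ℕ → A) → (Fin L → A) → ℝ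
  | 0, _, _ => 1
  | (L+1), u, w =>
      Real.exp (φ (GGT.cons (w 0) u)) * mass φ L (GGT.cons (w 0) u) (fun i => w i.succ)

lemma mass_zero (φ : (ℕ → A) → ℝ) (u : ℕ → A) (w : Fin 0 → A) : mass φ 0 u w = 1 := rfl

lemma mass_succ (φ : (ℕ → A) → ℝ) (L : ℕ) (u : ℕ → A) (w : Fin (L+1) → A) :
    mass φ (L+1) u w
      = Real.exp (φ (GGT.cons (w 0) u)) * mass φ L (GGT.cons (w 0) u) (fun i => w i.succ) := rfl

lemma mass_pos (φ : (ℕ → A) → ℝ) : ∀ (L : ℕ) (u : ℕ → A) (w : Fin L → A), 0 < mass φ L u w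
  | 0, _, _ => one_pos
  | (L+1), u, w => mul_pos (Real.exp_pos _) (mass_pos φ L _ _)

variable {φ : (ℕ → A) → ℝ}

lemma summable_ker (hφ : GGT.IsNormalized φ) (u : ℕ → A) :
    Summable fun s : A => Real.exp (φ (GGT.cons s u)) := by
  by_contra h
  have h0 := tsum_eq_zero_of_not_summable h
  rw [hφ u] at h0
  exact one_ne_zero h0

lemma mass_cons (φ : (ℕ → A) → ℝ) (L : ℕ) (u : ℕ → A) (s : A) (w : Fin L → A) :
    mass φ (L+1) u (Fin.cons s w)
      = Real.exp (φ (GGT.cons s u)) * mass φ L (GGT.cons s u) w := by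
  rw [mass_succ]
  simp [Fin.cons_succ]

lemma mass_summable_tsum (hφ : GGT.IsNormalized φ) :
    ∀ (L : ℕ) (u : ℕ → A),
      Summable (mass φ L u) ∧ ∑' w : Fin L → A, mass φ L u w = 1 := by
  intro L
  induction L with
  | zero =>
    intro u
    constructor
    · exact Summable.of_finite
    · rw [tsum_eq_single (default : Fin 0 → A)
        (fun b hb => absurd (Subsingleton.elim b default) hb)]
      rfl
  | succ L ih =>
    intro u
    set e := Fin.consEquiv (fun _ : Fin (L+1) => A) with he
    have hco : ∀ p : A × (Fin L → A),
        mass φ (L+1) u (e p)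
          = Real.exp (φ (GGT.cons p.1 u)) * mass φ L (GGT.cons p.1 u) p.2 := by
      rintro ⟨s, w⟩
      exact mass_cons φ L u s w
    have hnn : ∀ p : A × (Fin L → A), 0 ≤ mass φ (L+1) u (e p) :=
      fun p => (mass_pos φ _ _ _).le
    have hfib : ∀ s : A, Summable fun w : Fin L → A => mass φ (L+1) u (e (s, w)) := by
      intro s
      have := ((ih (GGT.cons s u)).1).mul_left (Real.exp (φ (GGT.cons s u)))
      refine this.congr fun w => ?_
      rw [hco (s, w)]
    have htfib : ∀ s : A,
        (∑' w : Fin L → A, mass φ (L+1) u (e (s, w))) = Real.exp (φ (GGT.cons s u)) := by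
      intro s
      have : (∑' w : Fin L → A, mass φ (L+1) u (e (s, w)))
          = ∑' w : Fin L → A, Real.exp (φ (GGT.cons s u)) * mass φ L (GGT.cons s u) w :=
        tsum_congr fun w => hco (s, w)
      rw [this, tsum_mul_left, (ih (GGT.cons s u)).2, mul_one]
    have hout : Summable fun s : A => ∑' w : Fin L → A, mass φ (L+1) u (e (s, w)) := by
      refine (summable_ker hφ u).congr fun s => (htfib s).symm
    have hprod : Summable fun p : A × (Fin L → A) => mass φ (L+1) u (e p) := by
      refine (summable_prod_of_nonneg hnn).2 ⟨hfib, hout⟩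
    have hs : Summable (mass φ (L+1) u) := e.summable_iff.1 hprod
    refine ⟨hs, ?_⟩
    rw [← e.tsum_eq (mass φ (L+1) u)]
    rw [Summable.tsum_prod hprod]
    calc (∑' s : A, ∑' w : Fin L → A, mass φ (L+1) u (e (s, w)))
        = ∑' s : A, Real.exp (φ (GGT.cons s u)) := tsum_congr htfib
      _ = 1 := hφ u

lemma chi_bound_ennreal (φ : (ℕ → A) → ℝ) {u v : ℕ → A} {d : ℕ}
    (hd : ∀ i, i < d → u i = v i) :
    (∑' s : A, ENNReal.ofReal
        ((Real.exp (φ (GGT.cons s u)) - Real.exp (φ (GGT.cons s v))) ^ 2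
          / Real.exp (φ (GGT.cons s v))))
      ≤ GGT.chiSq φ d := by
  have h1 : GGT.wcat d u (fun m => u (m + d)) = u := by
    funext t
    by_cases h : t < d
    · simp [GGT.wcat, h]
    · simp only [GGT.wcat, h, if_false]
      congr 1
      omega
  have h2 : GGT.wcat d u (fun m => v (m + d)) = v := by
    funext t
    by_cases h : t < d
    · simp only [GGT.wcat, h, if_true]
      exact hd t h
    · simp only [GGT.wcat, h, if_false]
      congr 1
      omega
  rw [GGT.chiSq]
  refine le_iSup_of_le u (le_iSup_of_le (fun m => u (m + d)) (le_iSup_of_le (fun m => v (m + d)) ?_))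
  rw [h1, h2]



lemma chi_real (φ : (ℕ → A) → ℝ) {u v : ℕ → A} {d : ℕ}
    (hd : ∀ i, i < d → u i = v i) (hfin : GGT.chiSq φ d ≠ ⊤) :
    Summable (fun s : A =>
      (Real.exp (φ (GGT.cons s u)) - Real.exp (φ (GGT.cons s v))) ^ 2
        / Real.exp (φ (GGT.cons s v))) ∧
    (∑' s : A, (Real.exp (φ (GGT.cons s u)) - Real.exp (φ (GGT.cons s v))) ^ 2
        / Real.exp (φ (GGT.cons s v))) ≤ (GGT.chiSq φ d).toReal := by
  set g : A → ℝ := fun s =>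
    (Real.exp (φ (GGT.cons s u)) - Real.exp (φ (GGT.cons s v))) ^ 2
      / Real.exp (φ (GGT.cons s v)) with hg
  have hgnn : ∀ s, 0 ≤ g s := fun s => div_nonneg (sq_nonneg _) (Real.exp_pos _).le
  have hle := chi_bound_ennreal φ hd
  have hne : (∑' s : A, ENNReal.ofReal (g s)) ≠ ⊤ :=
    (lt_of_le_of_lt hle (lt_top_iff_ne_top.2 hfin)).ne
  have hsum : Summable g := by
    have := ENNReal.summable_toReal hne
    refine this.congr fun s => ?_
    rw [ENNReal.toReal_ofReal (hgnn s)]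
  refine ⟨hsum, ?_⟩
  have heq : ENNReal.ofReal (∑' s, g s) = ∑' s, ENNReal.ofReal (g s) :=
    ENNReal.ofReal_tsum_of_nonneg hgnn hsum
  have h2 : ENNReal.ofReal (∑' s, g s) ≤ GGT.chiSq φ d := heq ▸ hle
  calc (∑' s, g s) = (ENNReal.ofReal (∑' s, g s)).toReal :=
        (ENNReal.toReal_ofReal (tsum_nonneg hgnn)).symm
    _ ≤ (GGT.chiSq φ d).toReal := ENNReal.toReal_mono hfin h2

lemma sub_le_mul_log {a b : ℝ} (ha : 0 < a) (hb : 0 < b) :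
    a - b ≤ a * Real.log (a / b) := by
  have h1 : 1 - (a / b)⁻¹ ≤ Real.log (a / b) :=
    Real.one_sub_inv_le_log_of_pos (div_pos ha hb)
  have h2 : (a / b)⁻¹ = b / a := by rw [inv_div]
  rw [h2] at h1
  have h3 := mul_le_mul_of_nonneg_left h1 ha.le
  have h4 : a * (1 - b / a) = a - b := by field_simp
  linarith

lemma mul_log_le_sub {a b : ℝ} (ha : 0 < a) (hb : 0 < b) :
    a * Real.log (a / b) ≤ a ^ 2 / b - a := by
  have h1 : Real.log (a / b) ≤ a / b - 1 :=
    Real.log_le_sub_one_of_pos (div_pos ha hb)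
  have h3 := mul_le_mul_of_nonneg_left h1 ha.le
  have h4 : a * (a / b - 1) = a ^ 2 / b - a := by field_simp
  linarith

lemma sq_div_identity {a b : ℝ} (hb : 0 < b) :
    a ^ 2 / b - a = (a - b) ^ 2 / b + (a - b) := by
  field_simp
  ring

lemma step_facts (p q : A → ℝ) (hppos : ∀ s, 0 < p s) (hqpos : ∀ s, 0 < q s)
    (hpsum : Summable p) (hqsum : Summable q)
    (hptsum : ∑' s, p s = 1) (hqtsum : ∑' s, q s = 1)
    (hχsum : Summable (fun s => (p s - q s) ^ 2 / q s)) :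
    Summable (fun s => p s * Real.log (p s / q s)) ∧
    0 ≤ (∑' s, p s * Real.log (p s / q s)) ∧
    (∑' s, p s * Real.log (p s / q s)) ≤ ∑' s, (p s - q s) ^ 2 / q s := by
  have h_lb : ∀ s, p s - q s ≤ p s * Real.log (p s / q s) :=
    fun s => sub_le_mul_log (hppos s) (hqpos s)
  have h_ub : ∀ s, p s * Real.log (p s / q s) ≤ p s ^ 2 / q s - p s :=
    fun s => mul_log_le_sub (hppos s) (hqpos s)
  have hpq : Summable (fun s => p s - q s) := hpsum.sub hqsum
  have hsub : Summable (fun s => p s ^ 2 / q s - p s) :=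
    (hχsum.add hpq).congr fun s => (sq_div_identity (hqpos s)).symm
  have hdom : Summable (fun s => (p s ^ 2 / q s - p s) - (p s - q s)) := hsub.sub hpq
  have hmid0 : Summable (fun s => p s * Real.log (p s / q s) - (p s - q s)) :=
    Summable.of_nonneg_of_le (fun s => sub_nonneg.2 (h_lb s))
      (fun s => sub_le_sub_right (h_ub s) _) hdom
  have hmid : Summable (fun s => p s * Real.log (p s / q s)) :=
    (hpq.add hmid0).congr fun s => by ring
  have hpq0 : (∑' s, (p s - q s)) = 0 := by
    rw [Summable.tsum_sub hpsum hqsum, hptsum, hqtsum]; ring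
  refine ⟨hmid, ?_, ?_⟩
  · have := Summable.tsum_le_tsum h_lb hpq hmid
    rw [hpq0] at this
    exact this
  · have h1 := Summable.tsum_le_tsum h_ub hmid hsub
    have h2 : (∑' s, (p s ^ 2 / q s - p s)) = ∑' s, (p s - q s) ^ 2 / q s := by
      calc (∑' s, (p s ^ 2 / q s - p s))
          = ∑' s, ((p s - q s) ^ 2 / q s + (p s - q s)) :=
            tsum_congr fun s => sq_div_identity (hqpos s)
        _ = (∑' s, (p s - q s) ^ 2 / q s) + ∑' s, (p s - q s) :=
            Summable.tsum_add hχsum hpq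
        _ = ∑' s, (p s - q s) ^ 2 / q s := by rw [hpq0, add_zero]
    rw [h2] at h1
    exact h1

set_option maxHeartbeats 2000000 in
lemma core (hφ : GGT.IsNormalized φ) :
    ∀ (L : ℕ) (u v : ℕ → A) (d : ℕ), (∀ i, i < d → u i = v i) →
      (∀ t, t < L → GGT.chiSq φ (t + d) ≠ ⊤) →
      Summable (fun w : Fin L → A =>
          mass φ L u w * Real.log (mass φ L u w / mass φ L v w)) ∧
      0 ≤ (∑' w : Fin L → A, mass φ L u w * Real.log (mass φ L u w / mass φ L v w)) ∧
      (∑' w : Fin L → A, mass φ L u w * Real.log (mass φ L u w / mass φ L v w))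
        ≤ ∑ t ∈ Finset.range L, (GGT.chiSq φ (t + d)).toReal := by
  intro L
  induction L with
  | zero =>
    intro u v d hd hfin
    have h0 : (fun w : Fin 0 → A =>
        mass φ 0 u w * Real.log (mass φ 0 u w / mass φ 0 v w)) = fun _ => 0 := by
      funext w
      simp [mass_zero]
    rw [h0]
    refine ⟨summable_zero, ?_, ?_⟩ <;> simp [tsum_zero]
  | succ L ih =>
    intro u v d hd hfin
    have hfd : GGT.chiSq φ d ≠ ⊤ := by
      have := hfin 0 (Nat.succ_pos L); rwa [zero_add] at this
    obtain ⟨hχsum, hχle⟩ := chi_real φ hd hfd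
    set p : A → ℝ := fun s => Real.exp (φ (GGT.cons s u)) with hp_def
    set q : A → ℝ := fun s => Real.exp (φ (GGT.cons s v)) with hq_def
    have hppos : ∀ s, 0 < p s := fun s => Real.exp_pos _
    have hqpos : ∀ s, 0 < q s := fun s => Real.exp_pos _
    obtain ⟨hcsum, hc0, hcle⟩ := step_facts p q hppos hqpos
      (summable_ker hφ u) (summable_ker hφ v) (hφ u) (hφ v) hχsum
    set c : A → ℝ := fun s => p s * Real.log (p s / q s) with hc_def
    -- tail
    have hd' : ∀ s : A, ∀ i, i < d + 1 → GGT.cons s u i = GGT.cons s v i := by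
      intro s i hi
      cases i with
      | zero => rfl
      | succ j => exact hd j (by omega)
    have hfin' : ∀ t, t < L → GGT.chiSq φ (t + (d + 1)) ≠ ⊤ := by
      intro t ht
      have := hfin (t + 1) (by omega)
      rwa [show t + 1 + d = t + (d + 1) by omega] at this
    have IH := fun s : A => ih (GGT.cons s u) (GGT.cons s v) (d + 1) (hd' s) hfin'
    set B' : ℝ := ∑ t ∈ Finset.range L, (GGT.chiSq φ (t + (d + 1))).toReal with hB'
    have hB'0 : 0 ≤ B' := Finset.sum_nonneg fun t _ => ENNReal.toReal_nonneg
    set Pm : A → (Fin L → A) → ℝ := fun s => mass φ L (GGT.cons s u) with hPm_def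
    set Qm : A → (Fin L → A) → ℝ := fun s => mass φ L (GGT.cons s v) with hQm_def
    set fs : A → (Fin L → A) → ℝ :=
      fun s w => Pm s w * Real.log (Pm s w / Qm s w) with hfs_def
    have hfs_summ : ∀ s, Summable (fs s) := fun s => (IH s).1
    have hK0 : ∀ s, 0 ≤ ∑' w, fs s w := fun s => (IH s).2.1
    have hKB : ∀ s, (∑' w, fs s w) ≤ B' := fun s => (IH s).2.2
    have hPmsum : ∀ s, Summable (Pm s) := fun s => (mass_summable_tsum hφ L _).1
    have hQmsum : ∀ s, Summable (Qm s) := fun s => (mass_summable_tsum hφ L _).1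
    have hPmtsum : ∀ s, (∑' w, Pm s w) = 1 := fun s => (mass_summable_tsum hφ L _).2
    have hQmtsum : ∀ s, (∑' w, Qm s w) = 1 := fun s => (mass_summable_tsum hφ L _).2
    have hPmpos : ∀ s w, 0 < Pm s w := fun s w => mass_pos φ L _ w
    have hQmpos : ∀ s w, 0 < Qm s w := fun s w => mass_pos φ L _ w
    -- abs sums for fs
    have hfs_lb : ∀ s w, Pm s w - Qm s w ≤ fs s w :=
      fun s w => sub_le_mul_log (hPmpos s w) (hQmpos s w)
    set ns : A → (Fin L → A) → ℝ := fun s w => max (-(fs s w)) 0 with hns_def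
    have hns_nonneg : ∀ s w, 0 ≤ ns s w := fun s w => le_max_right _ _
    have hns_le : ∀ s w, ns s w ≤ Qm s w := by
      intro s w
      refine max_le ?_ (hQmpos s w).le
      have := hfs_lb s w
      have := hPmpos s w
      linarith
    have hns_sum : ∀ s, Summable (ns s) :=
      fun s => Summable.of_nonneg_of_le (hns_nonneg s) (hns_le s) (hQmsum s)
    have habs_eq : ∀ s w, |fs s w| = fs s w + 2 * ns s w := by
      intro s w
      rcases le_total 0 (fs s w) with h | h
      · have hns0 : ns s w = 0 := max_eq_right (by linarith)
        rw [abs_of_nonneg h, hns0]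
        ring
      · have hns0 : ns s w = -(fs s w) := max_eq_left (by linarith)
        rw [abs_of_nonpos h, hns0]
        ring
    have habs_sum : ∀ s, Summable (fun w => |fs s w|) := fun s => (hfs_summ s).abs
    have habs_tsum_le : ∀ s, (∑' w, |fs s w|) ≤ B' + 2 := by
      intro s
      have h1 : (∑' w, |fs s w|) = (∑' w, fs s w) + 2 * ∑' w, ns s w := by
        calc (∑' w, |fs s w|) = ∑' w, (fs s w + 2 * ns s w) := tsum_congr (habs_eq s)
          _ = (∑' w, fs s w) + ∑' w, 2 * ns s w :=
              Summable.tsum_add (hfs_summ s) ((hns_sum s).mul_left 2)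
          _ = (∑' w, fs s w) + 2 * ∑' w, ns s w := by rw [tsum_mul_left]
      have h2 : (∑' w, ns s w) ≤ 1 := by
        have := Summable.tsum_le_tsum (hns_le s) (hns_sum s) (hQmsum s)
        rw [hQmtsum s] at this
        exact this
      have := hKB s
      linarith
    -- the product decomposition
    set e := Fin.consEquiv (fun _ : Fin (L + 1) => A) with he_def
    set F : (Fin (L + 1) → A) → ℝ := fun w =>
      mass φ (L + 1) u w * Real.log (mass φ (L + 1) u w / mass φ (L + 1) v w) with hF_def
    have hsplit : ∀ s : A, ∀ w : Fin L → A,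
        F (e (s, w)) = c s * Pm s w + p s * fs s w := by
      intro s w
      have h1 : mass φ (L + 1) u (e (s, w)) = p s * Pm s w := mass_cons φ L u s w
      have h2 : mass φ (L + 1) v (e (s, w)) = q s * Qm s w := mass_cons φ L v s w
      rw [hF_def]
      simp only []
      rw [h1, h2]
      have h3 : p s * Pm s w / (q s * Qm s w) = (p s / q s) * (Pm s w / Qm s w) := by
        rw [div_mul_div_comm]
      rw [h3, Real.log_mul (ne_of_gt (div_pos (hppos s) (hqpos s)))
        (ne_of_gt (div_pos (hPmpos s w) (hQmpos s w)))]
      rw [hc_def, hfs_def]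
      ring
    -- summability of the two pieces
    have hG1 : Summable (fun pr : A × (Fin L → A) => |c pr.1| * Pm pr.1 pr.2) := by
      refine (summable_prod_of_nonneg ?_).2 ⟨?_, ?_⟩
      · intro pr; exact mul_nonneg (abs_nonneg _) (hPmpos _ _).le
      · intro s; exact Summable.congr ((hPmsum s).mul_left (|c s|)) fun w => rfl
      · refine hcsum.abs.congr fun s => ?_
        have hb : (∑' y : Fin L → A, |c (s, y).1| * Pm (s, y).1 (s, y).2)
            = ∑' y : Fin L → A, |c s| * Pm s y := tsum_congr fun w => rfl
        rw [hb, tsum_mul_left, hPmtsum s, mul_one]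
    have hF1 : Summable (fun pr : A × (Fin L → A) => c pr.1 * Pm pr.1 pr.2) := by
      have habs : Summable (fun pr : A × (Fin L → A) => |c pr.1 * Pm pr.1 pr.2|) := by
        refine hG1.congr fun pr => ?_
        rw [abs_mul (c pr.1) (Pm pr.1 pr.2), abs_of_nonneg (hPmpos pr.1 pr.2).le]
      exact habs.of_abs
    have hG2 : Summable (fun pr : A × (Fin L → A) => p pr.1 * |fs pr.1 pr.2|) := by
      refine (summable_prod_of_nonneg ?_).2 ⟨?_, ?_⟩
      · intro pr; exact mul_nonneg (hppos _).le (abs_nonneg _)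
      · intro s; exact Summable.congr ((habs_sum s).mul_left (p s)) fun w => rfl
      · refine Summable.of_nonneg_of_le (fun s => tsum_nonneg fun w =>
          mul_nonneg (hppos _).le (abs_nonneg _)) (fun s => ?_)
          (((summable_ker hφ u).mul_right (B' + 2)))
        have hb : (∑' y : Fin L → A, p (s, y).1 * |fs (s, y).1 (s, y).2|)
            = ∑' y : Fin L → A, p s * |fs s y| := tsum_congr fun w => rfl
        rw [hb, tsum_mul_left]
        exact mul_le_mul_of_nonneg_left (habs_tsum_le s) (hppos s).le
    have hF2 : Summable (fun pr : A × (Fin L → A) => p pr.1 * fs pr.1 pr.2) := by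
      have habs : Summable (fun pr : A × (Fin L → A) => |p pr.1 * fs pr.1 pr.2|) := by
        refine hG2.congr fun pr => ?_
        rw [abs_mul (p pr.1) (fs pr.1 pr.2), abs_of_nonneg (hppos pr.1).le]
      exact habs.of_abs
    have hFe : Summable (fun pr : A × (Fin L → A) => F (e pr)) := by
      refine (hF1.add hF2).congr fun pr => ?_
      rw [← hsplit pr.1 pr.2]
    have hFsum : Summable F := e.summable_iff.1 hFe
    -- tsum computation
    have htsum_e : (∑' w : Fin (L + 1) → A, F w) = ∑' pr : A × (Fin L → A), F (e pr) :=
      (e.tsum_eq F).symm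
    have htsum_split : (∑' pr : A × (Fin L → A), F (e pr))
        = (∑' pr : A × (Fin L → A), c pr.1 * Pm pr.1 pr.2)
          + ∑' pr : A × (Fin L → A), p pr.1 * fs pr.1 pr.2 := by
      rw [← Summable.tsum_add hF1 hF2]
      exact tsum_congr fun pr => hsplit pr.1 pr.2
    have ht1 : (∑' pr : A × (Fin L → A), c pr.1 * Pm pr.1 pr.2) = ∑' s, c s := by
      rw [Summable.tsum_prod hF1]
      refine tsum_congr fun s => ?_
      have hb : (∑' y : Fin L → A, c (s, y).1 * Pm (s, y).1 (s, y).2)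
          = ∑' y : Fin L → A, c s * Pm s y := tsum_congr fun w => rfl
      rw [hb, tsum_mul_left, hPmtsum s, mul_one]
    have ht2 : (∑' pr : A × (Fin L → A), p pr.1 * fs pr.1 pr.2)
        = ∑' s, p s * ∑' w, fs s w := by
      rw [Summable.tsum_prod hF2]
      refine tsum_congr fun s => ?_
      have hb : (∑' y : Fin L → A, p (s, y).1 * fs (s, y).1 (s, y).2)
          = ∑' y : Fin L → A, p s * fs s y := tsum_congr fun w => rfl
      rw [hb, tsum_mul_left]
    have hpKsum : Summable (fun s => p s * ∑' w, fs s w) :=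
      Summable.of_nonneg_of_le (fun s => mul_nonneg (hppos s).le (hK0 s))
        (fun s => mul_le_mul_of_nonneg_left (hKB s) (hppos s).le)
        ((summable_ker hφ u).mul_right B')
    have hpK0 : 0 ≤ ∑' s, p s * ∑' w, fs s w :=
      tsum_nonneg fun s => mul_nonneg (hppos s).le (hK0 s)
    have hpKB : (∑' s, p s * ∑' w, fs s w) ≤ B' := by
      have h1 := Summable.tsum_le_tsum
        (fun s => mul_le_mul_of_nonneg_left (hKB s) (hppos s).le)
        hpKsum ((summable_ker hφ u).mul_right B')
      have h2 : (∑' s, p s * B') = B' := by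
        rw [tsum_mul_right]
        rw [show (∑' s, p s) = 1 from hφ u, one_mul]
      rw [h2] at h1
      exact h1
    -- final bounds
    have hRHS : (∑ t ∈ Finset.range (L + 1), (GGT.chiSq φ (t + d)).toReal)
        = B' + (GGT.chiSq φ d).toReal := by
      have h3 : ∀ t ∈ Finset.range L,
          (GGT.chiSq φ (t + 1 + d)).toReal = (GGT.chiSq φ (t + (d + 1))).toReal :=
        fun t _ => by rw [show t + 1 + d = t + (d + 1) by omega]
      rw [Finset.sum_range_succ', Finset.sum_congr rfl h3, zero_add, hB']
    refine ⟨hFsum, ?_, ?_⟩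
    · rw [htsum_e, htsum_split, ht1, ht2]
      linarith
    · rw [htsum_e, htsum_split, ht1, ht2, hRHS]
      have : (∑' s, c s) ≤ (GGT.chiSq φ d).toReal := le_trans hcle hχle
      linarith

end GGTP

namespace GGTP
variable {A : Type*} {φ : (ℕ → A) → ℝ}
variable [Countable A] [MeasurableSpace A] [DiscreteMeasurableSpace A]

def cylSet (m : ℕ) (w : ℕ → A) : Set (ℤ → A) :=
  {ω | ∀ j : ℕ, 1 ≤ j → j ≤ m → ω (j : ℤ) = w j}

def pastW (x w : ℕ → A) (i : ℕ) : ℕ → A := fun t => if t < i then w (i - t) else x (t - i)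

noncomputable def cmass (φ : (ℕ → A) → ℝ) (x w : ℕ → A) : ℕ → ℝ
  | 0 => 1
  | (i+1) => cmass φ x w i * Real.exp (φ (GGT.cons (w (i+1)) (pastW x w i)))

lemma cmass_pos (φ : (ℕ → A) → ℝ) (x w : ℕ → A) : ∀ i, 0 < cmass φ x w i
  | 0 => one_pos
  | (i+1) => mul_pos (cmass_pos φ x w i) (Real.exp_pos _)

lemma measurable_past (n : ℤ) : Measurable (GGT.past (A := A) n) :=
  measurable_pi_lambda _ (fun _ => measurable_pi_apply _)

lemma measurableSet_eq_coord (j : ℤ) (v : A) : MeasurableSet {ω : ℤ → A | ω j = v} := by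
  have h : {ω : ℤ → A | ω j = v} = (fun ω : ℤ → A => ω j) ⁻¹' {v} := by ext ω; simp
  rw [h]
  exact (measurable_pi_apply j) (MeasurableSet.of_discrete (s := {v}))

lemma measurableSet_cyl (m : ℕ) (w : ℕ → A) : MeasurableSet (cylSet m w) := by
  have h : cylSet m w
      = ⋂ (j : ℕ), ⋂ (_ : 1 ≤ j), ⋂ (_ : j ≤ m), {ω : ℤ → A | ω (j : ℤ) = w j} := by
    ext ω; simp [cylSet]
  rw [h]
  exact MeasurableSet.iInter fun j => MeasurableSet.iInter fun _ =>
    MeasurableSet.iInter fun _ => measurableSet_eq_coord _ _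

lemma cyl_mem_pastMS (m : ℕ) (w : ℕ → A) :
    MeasurableSet[GGT.pastMS (m : ℤ)] (cylSet m w) := by
  rw [GGT.pastMS]
  rw [MeasurableSpace.measurableSet_comap]
  refine ⟨{g : ℕ → A | ∀ j : ℕ, 1 ≤ j → j ≤ m → g (m - j) = w j}, ?_, ?_⟩
  · have h : {g : ℕ → A | ∀ j : ℕ, 1 ≤ j → j ≤ m → g (m - j) = w j}
        = ⋂ (j : ℕ), ⋂ (_ : 1 ≤ j), ⋂ (_ : j ≤ m), {g : ℕ → A | g (m - j) = w j} := by
      ext g; simp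
    rw [h]
    exact MeasurableSet.iInter fun j => MeasurableSet.iInter fun _ =>
      MeasurableSet.iInter fun _ => by
        have h2 : {g : ℕ → A | g (m - j) = w j} = (fun g : ℕ → A => g (m - j)) ⁻¹' {w j} := by
          ext g; simp
        rw [h2]
        exact (measurable_pi_apply _) (MeasurableSet.of_discrete (s := {w j}))
  · ext ω
    simp only [Set.mem_preimage, Set.mem_setOf_eq, cylSet, GGT.past]
    constructor
    · intro h j h1 h2
      have h3 := h j h1 h2
      rwa [show (m : ℤ) - ((m - j : ℕ) : ℤ) = (j : ℤ) by
        have : ((m - j : ℕ) : ℤ) = (m : ℤ) - (j : ℤ) := by push_cast [h2]; ring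
        omega] at h3
    · intro h j h1 h2
      rw [show (m : ℤ) - ((m - j : ℕ) : ℤ) = (j : ℤ) by
        have : ((m - j : ℕ) : ℤ) = (m : ℤ) - (j : ℤ) := by push_cast [h2]; ring
        omega]
      exact h j h1 h2

lemma measurableSet_past_singleton (x : ℕ → A) :
    MeasurableSet ({x} : Set (ℕ → A)) := by
  have h : ({x} : Set (ℕ → A)) = ⋂ n, (fun g : ℕ → A => g n) ⁻¹' {x n} := by
    ext g; simp [funext_iff]
  rw [h]
  exact MeasurableSet.iInter fun n =>
    (measurable_pi_apply n) (MeasurableSet.of_discrete (s := ({x n} : Set A)))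

lemma ae_past_zero (μ : Measure (ℤ → A)) (x : ℕ → A)
    (hμx : μ.map (GGT.past 0) = Measure.dirac x) :
    ∀ᵐ ω ∂μ, GGT.past (A := A) 0 ω = x := by
  have hxm := measurableSet_past_singleton x
  have h0 : μ (GGT.past (A := A) 0 ⁻¹' ({x}ᶜ)) = 0 := by
    rw [← Measure.map_apply (measurable_past 0) hxm.compl, hμx,
      Measure.dirac_apply' _ hxm.compl]
    simp
  refine ae_iff.2 ?_
  have hset : {ω : ℤ → A | ¬ GGT.past (A := A) 0 ω = x}
      = GGT.past (A := A) 0 ⁻¹' ({x}ᶜ) := by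
    ext ω; simp
  rw [hset]
  exact h0

theorem cyl_measure (hφ : GGT.IsNormalized φ) (μ : Measure (ℤ → A))
    (hμ : GGT.IsCompatible φ μ) (x : ℕ → A)
    (hμx : μ.map (GGT.past 0) = Measure.dirac x) (w : ℕ → A) :
    ∀ m : ℕ, μ (cylSet m w) = ENNReal.ofReal (cmass φ x w m) := by
  haveI := hμ.1
  intro m
  induction m with
  | zero =>
    have h : cylSet (A := A) 0 w = Set.univ := by
      ext ω
      simp only [cylSet, Set.mem_setOf_eq, Set.mem_univ, iff_true]
      intro j h1 h2
      omega
    rw [h, measure_univ]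
    simp [cmass]
  | succ m ihm =>
    set S := cylSet m w with hS_def
    set T := {ω : ℤ → A | ω ((m : ℤ) + 1) = w (m + 1)} with hT_def
    have hSm : MeasurableSet S := measurableSet_cyl m w
    have hT : MeasurableSet T := measurableSet_eq_coord _ _
    have hsplit : cylSet (m + 1) w = S ∩ T := by
      ext ω
      constructor
      · intro h
        refine ⟨fun j h1 h2 => h j h1 (by omega), ?_⟩
        have h3 := h (m + 1) (by omega) (le_refl _)
        rwa [show ((m + 1 : ℕ) : ℤ) = (m : ℤ) + 1 by push_cast; ring] at h3
      · rintro ⟨h1, h2⟩ j hj1 hj2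
        rcases Nat.lt_or_ge j (m + 1) with hlt | hge
        · exact h1 j hj1 (by omega)
        · have hj : j = m + 1 := by omega
          subst hj
          rwa [show ((m + 1 : ℕ) : ℤ) = (m : ℤ) + 1 by push_cast; ring]
    have hindint : Integrable (Set.indicator T (fun _ => (1 : ℝ))) μ :=
      (integrable_const 1).indicator hT
    have hle : GGT.pastMS (A := A) (m : ℤ) ≤ (by infer_instance : MeasurableSpace (ℤ → A)) := by
      rw [GGT.pastMS]
      exact (measurable_past (m : ℤ)).comap_le
    have hcond := hμ.2 m (w (m + 1))
    have e1 : ∫ ω in S, Set.indicator T (fun _ => (1 : ℝ)) ω ∂μ = (μ (S ∩ T)).toReal := by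
      rw [setIntegral_indicator hT, setIntegral_const]
      simp
      rfl
    have e2 : ∫ ω in S, Set.indicator T (fun _ => (1 : ℝ)) ω ∂μ
        = ∫ ω in S, (μ[Set.indicator T (fun _ => (1 : ℝ)) | GGT.pastMS (m : ℤ)]) ω ∂μ :=
      (setIntegral_condExp hle hindint (cyl_mem_pastMS m w)).symm
    have e3 : ∫ ω in S, (μ[Set.indicator T (fun _ => (1 : ℝ)) | GGT.pastMS (m : ℤ)]) ω ∂μ
        = ∫ ω in S, Real.exp (φ (GGT.cons (w (m + 1)) (GGT.past (m : ℤ) ω))) ∂μ := by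
      apply setIntegral_congr_ae hSm
      filter_upwards [hcond] with ω hω _
      exact hω
    have hae := ae_past_zero μ x hμx
    have e4 : ∫ ω in S, Real.exp (φ (GGT.cons (w (m + 1)) (GGT.past (m : ℤ) ω))) ∂μ
        = ∫ ω in S, Real.exp (φ (GGT.cons (w (m + 1)) (pastW x w m))) ∂μ := by
      apply setIntegral_congr_ae hSm
      filter_upwards [hae] with ω h0 hSmem
      have hpe : GGT.past (m : ℤ) ω = pastW x w m := by
        funext t
        by_cases ht : t < m
        · have h2 := hSmem (m - t) (by omega) (by omega)
          have hcast : (m : ℤ) - (t : ℤ) = ((m - t : ℕ) : ℤ) := by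
            have : ((m - t : ℕ) : ℤ) = (m : ℤ) - (t : ℤ) := by
              push_cast [Nat.le_of_lt ht]; ring
            omega
          show ω ((m : ℤ) - (t : ℤ)) = pastW x w m t
          rw [hcast, h2]
          simp [pastW, ht]
        · have h2 := congrFun h0 (t - m)
          have hcast : (0 : ℤ) - ((t - m : ℕ) : ℤ) = (m : ℤ) - (t : ℤ) := by
            have : ((t - m : ℕ) : ℤ) = (t : ℤ) - (m : ℤ) := by
              push_cast [Nat.le_of_not_lt ht]; ring
            omega
          show ω ((m : ℤ) - (t : ℤ)) = pastW x w m t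
          have h3 : GGT.past (A := A) 0 ω (t - m) = x (t - m) := h2
          rw [GGT.past] at h3
          rw [← hcast]
          rw [h3]
          simp [pastW, ht]
      rw [hpe]
    have e5 : ∫ ω in S, Real.exp (φ (GGT.cons (w (m + 1)) (pastW x w m))) ∂μ
        = (μ S).toReal * Real.exp (φ (GGT.cons (w (m + 1)) (pastW x w m))) := by
      rw [setIntegral_const]
      simp [smul_eq_mul]
      rfl
    have hfin : μ (S ∩ T) ≠ ⊤ := measure_ne_top μ _
    have hkey : (μ (S ∩ T)).toReal
        = (μ S).toReal * Real.exp (φ (GGT.cons (w (m + 1)) (pastW x w m))) := by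
      rw [← e1, e2, e3, e4, e5]
    have hS_toReal : (μ S).toReal = cmass φ x w m := by
      rw [ihm]
      exact ENNReal.toReal_ofReal (cmass_pos φ x w m).le
    rw [hsplit, ← ENNReal.ofReal_toReal hfin, hkey, hS_toReal]
    rfl

end GGTP

namespace GGTP
open ProbabilityTheory
variable {A : Type*} {φ : (ℕ → A) → ℝ}
variable [Countable A] [MeasurableSpace A] [DiscreteMeasurableSpace A]

lemma pastW_succ (x w : ℕ → A) (i : ℕ) :
    pastW x w (i + 1) = GGT.cons (w (i + 1)) (pastW x w i) := by
  funext t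
  cases t with
  | zero => simp [pastW, GGT.cons]
  | succ t =>
    show pastW x w (i + 1) (t + 1) = pastW x w i t
    by_cases ht : t < i
    · simp [pastW, ht, show t + 1 < i + 1 by omega, show i + 1 - (t + 1) = i - t by omega]
    · simp [pastW, ht, show ¬(t + 1 < i + 1) by omega, show t + 1 - (i + 1) = t - i by omega]

lemma pastW_congr (x : ℕ → A) {w w' : ℕ → A} {m : ℕ} (i : ℕ)
    (h : ∀ j, 1 ≤ j → j ≤ m → w j = w' j) (hi : i ≤ m) :
    pastW x w i = pastW x w' i := by
  funext t
  by_cases ht : t < i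
  · simp only [pastW, if_pos ht]
    exact h (i - t) (by omega) (by omega)
  · simp [pastW, ht]

lemma cmass_congr (x : ℕ → A) {w w' : ℕ → A} {m : ℕ}
    (h : ∀ j, 1 ≤ j → j ≤ m → w j = w' j) :
    ∀ i, i ≤ m → cmass φ x w i = cmass φ x w' i := by
  intro i
  induction i with
  | zero => intro _; rfl
  | succ i ih =>
    intro him
    show cmass φ x w i * _ = cmass φ x w' i * _
    rw [ih (by omega), pastW_congr x i h (by omega), h (i + 1) (by omega) him]

lemma cmass_add (x w : ℕ → A) :
    ∀ (L i : ℕ), cmass φ x w (i + L)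
      = cmass φ x w i * mass φ L (pastW x w i) (fun t : Fin L => w (i + 1 + (t : ℕ))) := by
  intro L
  induction L with
  | zero => intro i; rw [mass_zero]; ring
  | succ L ih =>
    intro i
    rw [show i + (L + 1) = (i + 1) + L by omega, ih (i + 1)]
    have h1 : cmass φ x w (i + 1)
        = cmass φ x w i * Real.exp (φ (GGT.cons (w (i + 1)) (pastW x w i))) := rfl
    rw [h1, mass_succ]
    have h0 : w (i + 1 + ((0 : Fin (L + 1)) : ℕ)) = w (i + 1) := by norm_num
    rw [h0, ← pastW_succ]
    have h2 : (fun t : Fin L => w (i + 1 + 1 + (t : ℕ)))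
        = fun t : Fin L => w (i + 1 + ((Fin.succ t : Fin (L + 1)) : ℕ)) := by
      funext t
      congr 1
      simp [Fin.val_succ]
      omega
    rw [h2]
    ring

lemma measurable_blockMap (l r : ℕ) : Measurable (GGT.blockMap (A := A) l r) :=
  measurable_pi_lambda _ (fun _ => measurable_pi_apply _)

lemma measurableSet_block_singleton {L : ℕ} (yb : Fin L → A) :
    MeasurableSet ({yb} : Set (Fin L → A)) := by
  have h : ({yb} : Set (Fin L → A)) = ⋂ t, (fun g : Fin L → A => g t) ⁻¹' {yb t} := by
    ext g; simp [funext_iff]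
  rw [h]
  exact MeasurableSet.iInter fun t =>
    (measurable_pi_apply t) (MeasurableSet.of_discrete (s := ({yb t} : Set A)))

theorem condBlockLaw_apply (hφ : GGT.IsNormalized φ) (M : ℕ → ℕ) (n k : ℕ)
    (h1 : 1 ≤ M (n - k)) (h2 : M (n - k) ≤ M n) (h3 : M n < M (n + 1))
    (a b : ℤ → A) (μ : Measure (ℤ → A)) (hμ : GGT.IsCompatible φ μ) (x : ℕ → A)
    (hμx : μ.map (GGT.past 0) = Measure.dirac x)
    (yb : Fin (M (n + 1) - M n) → A) :
    GGT.condBlockLaw M n k a b μ {yb}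
      = ENNReal.ofReal (mass φ (M (n + 1) - M n)
          (pastW x (fun j : ℕ => if j < M (n - k) then b (j : ℤ) else a (j : ℤ)) (M n - 1)) yb) := by
  haveI := hμ.1
  set u : ℕ → A := fun j : ℕ => if j < M (n - k) then b (j : ℤ) else a (j : ℤ) with hu
  set yext : ℕ → A := fun t => if h : t < (M (n + 1) - M n) then yb ⟨t, h⟩ else yb ⟨0, by omega⟩ with hyext
  set u' : ℕ → A := fun j => if j < M n then u j else yext (j - M n) with hu'
  have hE : GGT.condEvent M n k a b = cylSet (M n - 1) u := by
    ext ω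
    constructor
    · rintro ⟨ha, hb⟩ j hj1 hj2
      by_cases hj : j < M (n - k)
      · simp only [hu]; rw [if_pos hj]; exact hb j hj1 hj
      · simp only [hu]; rw [if_neg hj]; exact ha j (by omega) (by omega)
    · intro h
      constructor
      · intro j hj1 hj2
        have := h j (by omega) (by omega)
        simp only [hu] at this
        rwa [if_neg (show ¬ (j : ℕ) < M (n - k) by omega)] at this
      · intro j hj1 hj2
        have := h j hj1 (by omega)
        simp only [hu] at this
        rwa [if_pos hj2] at this
  have hpre : GGT.blockMap (A := A) (M n) (M (n + 1)) ⁻¹' {yb}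
      = {ω : ℤ → A | ∀ t : Fin (M (n + 1) - M n), ω ((M n : ℤ) + (t : ℕ)) = yb t} := by
    ext ω
    simp only [Set.mem_preimage, Set.mem_singleton_iff, Set.mem_setOf_eq, funext_iff,
      GGT.blockMap]
  have hcomb : GGT.condEvent M n k a b ∩ GGT.blockMap (A := A) (M n) (M (n + 1)) ⁻¹' {yb}
      = cylSet (M (n + 1) - 1) u' := by
    rw [hE, hpre]
    ext ω
    constructor
    · rintro ⟨hcyl, hblk⟩ j hj1 hj2
      by_cases hj : j < M n
      · have := hcyl j hj1 (by omega)
        rw [this]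
        simp only [hu']
        rw [if_pos hj]
      · have ht : j - M n < (M (n + 1) - M n) := by omega
        have := hblk ⟨j - M n, ht⟩
        have hcast : ((M n : ℤ) + ((j - M n : ℕ) : ℤ)) = (j : ℤ) := by
          push_cast [Nat.le_of_not_lt hj]
          omega
        rw [hcast] at this
        rw [this]
        simp only [hu']
        rw [if_neg hj]
        simp only [hyext]
        rw [dif_pos ht]
    · intro h
      constructor
      · intro j hj1 hj2
        have := h j hj1 (by omega)
        simp only [hu'] at this
        rwa [if_pos (show j < M n by omega)] at this
      · intro t
        have hj2 : M n + (t : ℕ) ≤ M (n + 1) - 1 := by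
          have := t.isLt
          omega
        have := h (M n + (t : ℕ)) (by omega) hj2
        have hcast : (((M n + (t : ℕ) : ℕ)) : ℤ) = (M n : ℤ) + ((t : ℕ) : ℤ) := by
          push_cast; ring
        rw [hcast] at this
        rw [this]
        simp only [hu']
        rw [if_neg (show ¬ M n + (t : ℕ) < M n by omega)]
        simp only [hyext]
        have harg : M n + (t : ℕ) - M n = (t : ℕ) := by omega
        rw [harg, dif_pos t.isLt]
  -- now compute
  have hEmeas : MeasurableSet (GGT.condEvent M n k a b) := by
    rw [hE]; exact measurableSet_cyl _ _
  have hunfold : GGT.condBlockLaw M n k a b μ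
      = (μ[|GGT.condEvent M n k a b]).map (GGT.blockMap (M n) (M (n + 1))) := rfl
  rw [hunfold,
    Measure.map_apply (measurable_blockMap _ _) (measurableSet_block_singleton yb),
    cond_apply hEmeas μ, hcomb, hE]
  rw [cyl_measure hφ μ hμ x hμx u (M n - 1), cyl_measure hφ μ hμ x hμx u' (M (n + 1) - 1)]
  have hagree : ∀ j, 1 ≤ j → j ≤ M n - 1 → u j = u' j := by
    intro j hj1 hj2
    simp only [hu']
    rw [if_pos (show j < M n by omega)]
  have hc1 : cmass φ x u (M n - 1) = cmass φ x u' (M n - 1) :=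
    cmass_congr x hagree (M n - 1) (le_refl _)
  have hsum : M n - 1 + (M (n + 1) - M n) = M (n + 1) - 1 := by omega
  have hc2 : cmass φ x u' (M (n + 1) - 1)
      = cmass φ x u' (M n - 1) * mass φ (M (n + 1) - M n) (pastW x u' (M n - 1))
          (fun t : Fin (M (n + 1) - M n) => u' (M n - 1 + 1 + (t : ℕ))) := by
    rw [← hsum]
    exact cmass_add x u' (M (n + 1) - M n) (M n - 1)
  have hword : (fun t : Fin (M (n + 1) - M n) => u' (M n - 1 + 1 + (t : ℕ))) = yb := by
    funext t
    have harg : M n - 1 + 1 + (t : ℕ) = M n + (t : ℕ) := by omega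
    rw [harg]
    simp only [hu']
    rw [if_neg (show ¬ M n + (t : ℕ) < M n by omega)]
    simp only [hyext]
    have harg2 : M n + (t : ℕ) - M n = (t : ℕ) := by omega
    rw [harg2, dif_pos t.isLt]
  have hpw : pastW x u' (M n - 1) = pastW x u (M n - 1) :=
    (pastW_congr x (M n - 1) hagree (le_refl _)).symm
  rw [hc2, hword, hpw, ← hc1]
  have hc1pos : 0 < cmass φ x u (M n - 1) := cmass_pos φ x u _
  rw [ENNReal.ofReal_mul hc1pos.le, ← mul_assoc,
    ENNReal.inv_mul_cancel (ENNReal.ofReal_pos.2 hc1pos).ne' ENNReal.ofReal_ne_top, one_mul]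

end GGTP

/-- **Lemma 1.** For compatible chains `μ, ν` with deterministic pasts `δ_x`, `δ_y`, the
Kullback–Leibler divergence between the conditional laws of the block `η_{M_n}^{M_{n+1}-1}`
given the two pasts `a_{M_{n-k}}^{M_n-1} b_1^{M_{n-k}-1}` and `a_{M_{n-k}}^{M_n-1} c_1^{M_{n-k}-1}`
is at most `Σ_{j=M_n}^{M_{n+1}-1} χ²_{j-M_{n-k}}(φ)`. -/
theorem block_KL_bound {A : Type*} [Countable A] [MeasurableSpace A]
    [DiscreteMeasurableSpace A]
    (φ : (ℕ → A) → ℝ) (hφ : GGT.IsNormalized φ)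
    (M : ℕ → ℕ) (hM1 : M 1 = 1) (hM : ∀ n : ℕ, 1 ≤ n → M n < M (n + 1))
    (x y : ℕ → A) (μ ν : MeasureTheory.Measure (ℤ → A))
    (hμ : GGT.IsCompatible φ μ) (hν : GGT.IsCompatible φ ν)
    (hμx : μ.map (GGT.past 0) = MeasureTheory.Measure.dirac x)
    (hνy : ν.map (GGT.past 0) = MeasureTheory.Measure.dirac y) :
    ∀ n k : ℕ, 1 ≤ n → k ≤ n - 1 → ∀ a b c : ℤ → A,
      ENNReal.ofReal
          (GGT.klDiv (GGT.condBlockLaw M n k a b μ) (GGT.condBlockLaw M n k a c ν))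
        ≤ ∑ j ∈ Finset.Ico (M n) (M (n + 1)), GGT.chiSq φ (j - M (n - k)) := by

  intro n k hn hk a b c
  have hmono : ∀ i j : ℕ, 1 ≤ i → i ≤ j → M i ≤ M j := by
    intro i j hi hij
    induction j with
    | zero => omega
    | succ j ihj =>
      rcases Nat.lt_or_ge j i with h | h
      · have hij' : i = j + 1 := by omega
        rw [hij']
      · exact le_trans (ihj (by omega)) (le_of_lt (hM j (by omega)))
  have hnk1 : 1 ≤ n - k := by omega
  have h1 : 1 ≤ M (n - k) := by
    have := hmono 1 (n - k) (le_refl _) hnk1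
    omega
  have h2 : M (n - k) ≤ M n := hmono (n - k) n hnk1 (by omega)
  have h3 : M n < M (n + 1) := hM n hn
  have hP := GGTP.condBlockLaw_apply hφ M n k h1 h2 h3 a b μ hμ x hμx
  have hQ := GGTP.condBlockLaw_apply hφ M n k h1 h2 h3 a c ν hν y hνy
  set U : ℕ → A := GGTP.pastW x
    (fun j : ℕ => if j < M (n - k) then b (j : ℤ) else a (j : ℤ)) (M n - 1) with hU
  set V : ℕ → A := GGTP.pastW y
    (fun j : ℕ => if j < M (n - k) then c (j : ℤ) else a (j : ℤ)) (M n - 1) with hV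
  have hUV : ∀ i, i < M n - M (n - k) → U i = V i := by
    intro i hi
    rw [hU, hV]
    have hilt : i < M n - 1 := by omega
    simp only [GGTP.pastW, if_pos hilt]
    rw [if_neg (show ¬ (M n - 1 - i) < M (n - k) by omega),
      if_neg (show ¬ (M n - 1 - i) < M (n - k) by omega)]
  have hkl0 : GGT.klDiv (GGT.condBlockLaw M n k a b μ) (GGT.condBlockLaw M n k a c ν)
      = ∑' yb : Fin (M (n + 1) - M n) → A,
          (GGT.condBlockLaw M n k a b μ {yb}).toReal
            * Real.log ((GGT.condBlockLaw M n k a b μ {yb}).toReal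
              / (GGT.condBlockLaw M n k a c ν {yb}).toReal) := rfl
  have hkl : GGT.klDiv (GGT.condBlockLaw M n k a b μ) (GGT.condBlockLaw M n k a c ν)
      = ∑' yb : Fin (M (n + 1) - M n) → A,
          GGTP.mass φ (M (n + 1) - M n) U yb
            * Real.log (GGTP.mass φ (M (n + 1) - M n) U yb
              / GGTP.mass φ (M (n + 1) - M n) V yb) := by
    rw [hkl0]
    refine tsum_congr fun yb => ?_
    rw [hP yb, hQ yb, ENNReal.toReal_ofReal (GGTP.mass_pos φ _ _ _).le,
      ENNReal.toReal_ofReal (GGTP.mass_pos φ _ _ _).le]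
  by_cases hfin : ∀ t, t < M (n + 1) - M n → GGT.chiSq φ (t + (M n - M (n - k))) ≠ ⊤
  · obtain ⟨hsum, h0, hle⟩ :=
      GGTP.core hφ (M (n + 1) - M n) U V (M n - M (n - k)) hUV hfin
    rw [hkl]
    refine le_trans (ENNReal.ofReal_le_ofReal hle) ?_
    rw [ENNReal.ofReal_sum_of_nonneg (fun t _ => ENNReal.toReal_nonneg)]
    have hsum_eq : (∑ t ∈ Finset.range (M (n + 1) - M n),
          ENNReal.ofReal ((GGT.chiSq φ (t + (M n - M (n - k)))).toReal))
        = ∑ t ∈ Finset.range (M (n + 1) - M n), GGT.chiSq φ (t + (M n - M (n - k))) :=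
      Finset.sum_congr rfl fun t ht =>
        ENNReal.ofReal_toReal (hfin t (Finset.mem_range.1 ht))
    rw [hsum_eq, Finset.sum_Ico_eq_sum_range]
    refine le_of_eq (Finset.sum_congr rfl fun t ht => ?_)
    congr 1
    omega
  · push_neg at hfin
    obtain ⟨t, ht, htop⟩ := hfin
    have htop' : GGT.chiSq φ ((M n + t) - M (n - k)) = ⊤ := by
      rwa [show (M n + t) - M (n - k) = t + (M n - M (n - k)) by omega]
    have hrhs : (∑ j ∈ Finset.Ico (M n) (M (n + 1)), GGT.chiSq φ (j - M (n - k))) = ⊤ :=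
      ENNReal.sum_eq_top.2 ⟨M n + t, Finset.mem_Ico.2 ⟨by omega, by omega⟩, htop'⟩
    rw [hrhs]
    exact le_top
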